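/- Let n be a nonempty finite type and Q : Matrix n n ℝ a symmetric matrix (Qᵀ = Q) with all entries nonnegative. Suppose there exist r : ℝ and a vector v : n → ℝ with v i > 0 for all i such that Q.mulVec v = r • v. Then the spectral radius of Q regarded as a complex matrix equals r, i.e., spectralRadius ℂ (Q.map (↑· : ℝ → ℂ)) = ENNReal.ofReal r. -/

import Mathlib

open Matrix

private lemma mem_spectrum_iff_matrix {n : Type*} [Fintype n] [DecidableEq n]
    (M : Matrix n n ℂ) (μ : ℂ) :
    μ ∈ spectrum ℂ M ↔ ∃ w : n → ℂ, w ≠ 0 ∧ M.mulVec w = μ • w := by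
  rw [← AlgEquiv.spectrum_eq (Matrix.toLinAlgEquiv' (R := ℂ) (n := n)),
    ← Module.End.hasEigenvalue_iff_mem_spectrum]
  constructor
  · intro h
    obtain ⟨w, hw⟩ := h.exists_hasEigenvector
    exact ⟨w, hw.right, by simpa [Matrix.toLinAlgEquiv'_apply, Matrix.toLin'_apply] using
      hw.apply_eq_smul⟩
  · rintro ⟨w, hw0, hw⟩
    exact Module.End.hasEigenvalue_of_hasEigenvector ⟨by
      rw [Module.End.mem_eigenspace_iff]
      simpa [Matrix.toLinAlgEquiv'_apply, Matrix.toLin'_apply] using hw, hw0⟩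

/-- Perron–Frobenius-type fact: a symmetric real matrix with nonnegative entries that has
an eigenvector with strictly positive entries and eigenvalue `r` has spectral radius `r`
(as a complex matrix). -/
theorem spectralRadius_eq_of_positive_eigenvector
    {n : Type*} [Fintype n] [DecidableEq n] [Nonempty n]
    (Q : Matrix n n ℝ) (hsym : Qᵀ = Q) (hnonneg : ∀ i j, 0 ≤ Q i j)
    (r : ℝ) (v : n → ℝ) (hv : ∀ i, 0 < v i)
    (heig : Q.mulVec v = r • v) :
    spectralRadius ℂ (Q.map (fun x => (x : ℂ))) = ENNReal.ofReal r := by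
  set M : Matrix n n ℂ := Q.map (fun x => (x : ℂ)) with hM
  obtain ⟨i₀⟩ := ‹Nonempty n›
  have hr0 : 0 ≤ r := by
    have h1 : 0 ≤ Q.mulVec v i₀ :=
      Finset.sum_nonneg fun j _ => mul_nonneg (hnonneg i₀ j) (hv j).le
    rw [heig] at h1
    have := hv i₀
    simp only [Pi.smul_apply, smul_eq_mul] at h1
    nlinarith
  -- r is in the spectrum
  have hrmem : (r : ℂ) ∈ spectrum ℂ M := by
    rw [mem_spectrum_iff_matrix]
    refine ⟨fun i => (v i : ℝ), ?_, ?_⟩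
    · intro h
      have := congrFun h i₀
      simp only [Pi.zero_apply, Complex.ofReal_eq_zero] at this
      exact (hv i₀).ne' this
    · ext i
      have := congrFun heig i
      simp only [Matrix.mulVec, dotProduct, Pi.smul_apply, smul_eq_mul] at this ⊢
      simp only [hM, Matrix.map_apply]
      exact_mod_cast congrArg (Complex.ofReal) this
  -- every element of the spectrum has norm ≤ r
  have hbound : ∀ μ ∈ spectrum ℂ M, ‖μ‖ ≤ r := by
    intro μ hμ
    rw [mem_spectrum_iff_matrix] at hμ
    obtain ⟨w, hw0, hw⟩ := hμ
    set u : n → ℝ := fun i => ‖w i‖ with hu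
    have hu0 : ∀ i, 0 ≤ u i := fun i => norm_nonneg _
    have key : ∀ i, ‖μ‖ * u i ≤ ∑ j, Q i j * u j := by
      intro i
      have h1 : M.mulVec w i = μ * w i := by
        have := congrFun hw i
        simpa using this
      have h2 : ‖μ * w i‖ = ‖μ‖ * u i := by rw [norm_mul]
      calc ‖μ‖ * u i = ‖M.mulVec w i‖ := by rw [h1, h2]
        _ = ‖∑ j, (Q i j : ℂ) * w j‖ := by
            simp [Matrix.mulVec, dotProduct, hM, Matrix.map_apply]
        _ ≤ ∑ j, ‖(Q i j : ℂ) * w j‖ := norm_sum_le _ _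
        _ = ∑ j, Q i j * u j := by
            refine Finset.sum_congr rfl fun j _ => ?_
            rw [norm_mul, Complex.norm_real, Real.norm_of_nonneg (hnonneg i j)]
    -- sum against v
    have hS : 0 < ∑ i, v i * u i := by
      obtain ⟨i, hi⟩ : ∃ i, w i ≠ 0 := by
        by_contra h
        push_neg at h
        exact hw0 (funext h)
      have : 0 < v i * u i := mul_pos (hv i) (norm_pos_iff.mpr hi)
      exact Finset.sum_pos' (fun j _ => mul_nonneg (hv j).le (hu0 j))
        ⟨i, Finset.mem_univ i, this⟩
    have hmain : ‖μ‖ * ∑ i, v i * u i ≤ r * ∑ i, v i * u i := by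
      have h1 : ∑ i, v i * (‖μ‖ * u i) ≤ ∑ i, v i * ∑ j, Q i j * u j :=
        Finset.sum_le_sum fun i _ => mul_le_mul_of_nonneg_left (key i) (hv i).le
      have hQsym : ∀ i j, Q i j = Q j i := fun i j => congrFun (congrFun hsym j) i
      have h2 : ∑ i, v i * ∑ j, Q i j * u j = ∑ j, (r * v j) * u j := by
        calc ∑ i, v i * ∑ j, Q i j * u j
            = ∑ i, ∑ j, v i * (Q i j * u j) := by simp [Finset.mul_sum]
          _ = ∑ j, ∑ i, v i * (Q i j * u j) := Finset.sum_comm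
          _ = ∑ j, (∑ i, Q j i * v i) * u j := by
              refine Finset.sum_congr rfl fun j _ => ?_
              rw [Finset.sum_mul]
              exact Finset.sum_congr rfl fun i _ => by rw [hQsym i j]; ring
          _ = ∑ j, (r * v j) * u j := by
              refine Finset.sum_congr rfl fun j _ => ?_
              have := congrFun heig j
              simp only [Matrix.mulVec, dotProduct, Pi.smul_apply,
                smul_eq_mul] at this
              rw [this]
      have h3 : ∑ i, v i * (‖μ‖ * u i) = ‖μ‖ * ∑ i, v i * u i := by
        rw [Finset.mul_sum]; exact Finset.sum_congr rfl fun i _ => by ring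
      have h4 : ∑ j, (r * v j) * u j = r * ∑ i, v i * u i := by
        rw [Finset.mul_sum]; exact Finset.sum_congr rfl fun i _ => by ring
      rw [← h3, ← h4]; exact h1.trans (le_of_eq h2)
    exact le_of_mul_le_mul_right hmain hS
  have hofr : ENNReal.ofReal r = (‖(r : ℂ)‖₊ : ENNReal) := by
    rw [← enorm_eq_nnnorm, ← ofReal_norm, Complex.norm_real, Real.norm_of_nonneg hr0]
  apply le_antisymm
  · rw [spectralRadius]
    refine iSup₂_le fun μ hμ => ?_
    rw [← enorm_eq_nnnorm, ← ofReal_norm]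
    exact ENNReal.ofReal_le_ofReal (hbound μ hμ)
  · rw [hofr, spectralRadius]
    exact le_iSup₂ (f := fun (μ : ℂ) (_ : μ ∈ spectrum ℂ M) => (‖μ‖₊ : ENNReal)) (r : ℂ) hrmem
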